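/- For real x with |x| < 1 and integer k_1, the identity Li_{k_1,1}(x) = ∫₀ˣ Li_{k_1}(u)/(1-u) du holds. -/

import Mathlib

open scoped BigOperators

/-- Coefficient of `x^N` in the multiple polylogarithm, with the index list
given in *reverse* order (`k_r` first). -/
noncomputable def mpolylogCoeff : List ℤ → ℕ → ℝ
  | [], 0 => 1
  | [], _ + 1 => 0
  | _ :: _, 0 => 0
  | k :: ks, (n + 1) =>
      (∑ j ∈ Finset.range (n + 1), mpolylogCoeff ks j) / ((n + 1 : ℕ) : ℝ) ^ k

/-- Multiple polylogarithm `Li_{k_1,…,k_r}(x) = ∑_{0<n_1<⋯<n_r} x^{n_r}/(n_1^{k_1}⋯n_r^{k_r})`,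
where the list `ks = [k_1,…,k_r]`. -/
noncomputable def mpolylog (ks : List ℤ) (x : ℝ) : ℝ :=
  ∑' n : ℕ, mpolylogCoeff ks.reverse n * x ^ n

lemma mpolylog_sum_nil (n : ℕ) : ∑ j ∈ Finset.range (n + 1), mpolylogCoeff [] j = 1 := by
  induction n with
  | zero => simp [mpolylogCoeff]
  | succ n ih => rw [Finset.sum_range_succ, ih]; simp [mpolylogCoeff]

lemma mpolylog_coeff_single_succ (k : ℤ) (n : ℕ) :
    mpolylogCoeff [k] (n + 1) = 1 / ((n + 1 : ℕ) : ℝ) ^ k := by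
  rw [mpolylogCoeff, mpolylog_sum_nil]

lemma mpolylog_summable_poly_geom (m : ℕ) {r : ℝ} (hr : ‖r‖ < 1) :
    Summable (fun n : ℕ => ((n : ℝ) + 1) ^ m * r ^ n) := by
  have h : (fun n : ℕ => ((n : ℝ) + 1) ^ m * r ^ n)
      = fun n : ℕ => ∑ i ∈ Finset.range (m + 1),
        (m.choose i : ℝ) * ((n : ℝ) ^ i * r ^ n) := by
    funext n
    rw [add_pow, Finset.sum_mul]
    exact Finset.sum_congr rfl fun i _ => by ring
  rw [h]
  exact summable_sum fun i _ =>
    (summable_pow_mul_geometric_of_norm_lt_one i hr).mul_left _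

lemma mpolylog_abs_coeff_le (k : ℤ) (n : ℕ) :
    |mpolylogCoeff [k] n| ≤ ((n : ℝ) + 1) ^ k.natAbs := by
  cases n with
  | zero => simp [mpolylogCoeff]
  | succ n =>
      rw [mpolylog_coeff_single_succ]
      have h1 : (1 : ℝ) ≤ ((n + 1 : ℕ) : ℝ) := by
        push_cast; linarith [Nat.cast_nonneg (α := ℝ) n]
      rw [abs_of_nonneg (by positivity), one_div, ← zpow_neg]
      calc ((n + 1 : ℕ) : ℝ) ^ (-k) ≤ ((n + 1 : ℕ) : ℝ) ^ (k.natAbs : ℤ) := by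
            apply zpow_le_zpow_right₀ h1; omega
        _ = ((n + 1 : ℕ) : ℝ) ^ k.natAbs := by rw [zpow_natCast]
        _ ≤ (((n + 1 : ℕ) : ℝ) + 1) ^ k.natAbs := by
            apply pow_le_pow_left₀ (by positivity) (by linarith)

/-- For `|x| < 1` and an integer `k₁`: `Li_{k₁,1}(x) = ∫₀ˣ Li_{k₁}(u)/(1-u) du`. -/
theorem mpolylog_k_one_eq_integral (k₁ : ℤ) (x : ℝ) (hx : |x| < 1) :
    mpolylog [k₁, 1] x = ∫ u in (0 : ℝ)..x, mpolylog [k₁] u / (1 - u) := by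
  classical
  set m : ℕ := k₁.natAbs + 1 with hm
  set r : ℝ := (|x| + 1) / 2 with hrdef
  have habs : 0 ≤ |x| := abs_nonneg x
  have hr0 : 0 ≤ r := by rw [hrdef]; linarith
  have hr1 : r < 1 := by rw [hrdef]; linarith
  have hxr : |x| < r := by rw [hrdef]; linarith
  have hrnorm : ‖r‖ < 1 := by rwa [Real.norm_eq_abs, abs_of_nonneg hr0]
  set c : ℕ → ℝ := mpolylogCoeff [k₁] with hc
  set b : ℕ → ℝ := fun n => ∑ j ∈ Finset.range (n + 1), c j with hbdef
  set d : ℕ → ℝ := mpolylogCoeff [1, k₁] with hd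
  have hd0 : d 0 = 0 := rfl
  have hdsucc : ∀ n : ℕ, d (n + 1) = b n / ((n : ℝ) + 1) := by
    intro n
    rw [hd]
    show (∑ j ∈ Finset.range (n + 1), mpolylogCoeff [k₁] j) / ((n + 1 : ℕ) : ℝ) ^ (1 : ℤ) = _
    rw [zpow_one]
    push_cast
    rfl
  -- bound on b
  have hb_le : ∀ n : ℕ, |b n| ≤ ((n : ℝ) + 1) ^ m := by
    intro n
    calc |b n| ≤ ∑ j ∈ Finset.range (n + 1), |c j| := Finset.abs_sum_le_sum_abs _ _
      _ ≤ ∑ j ∈ Finset.range (n + 1), ((n : ℝ) + 1) ^ k₁.natAbs := by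
          refine Finset.sum_le_sum fun j hj => ?_
          refine le_trans (mpolylog_abs_coeff_le k₁ j) ?_
          apply pow_le_pow_left₀ (by positivity)
          have := Finset.mem_range.mp hj
          have : (j : ℝ) ≤ (n : ℝ) := by exact_mod_cast Nat.lt_succ_iff.mp this
          linarith
      _ = ((n : ℝ) + 1) * ((n : ℝ) + 1) ^ k₁.natAbs := by
          rw [Finset.sum_const, Finset.card_range]; push_cast; ring
      _ = ((n : ℝ) + 1) ^ m := by rw [hm, pow_succ]; ring
  -- the functions
  set g : ℕ → ℝ → ℝ := fun n y => d n * y ^ n with hg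
  set g' : ℕ → ℝ → ℝ := fun n y => d n * ((n : ℝ) * y ^ (n - 1)) with hg'
  set u' : ℕ → ℝ := fun n => ((n : ℝ)) ^ m * r ^ (n - 1) with hu'def
  have hu' : Summable u' := by
    apply (summable_nat_add_iff 1).mp
    have := mpolylog_summable_poly_geom m hrnorm
    refine this.congr fun n => ?_
    rw [hu'def]; push_cast; simp
  have hg'_simp : ∀ n : ℕ, ∀ y : ℝ, g' (n + 1) y = b n * y ^ n := by
    intro n y
    show d (n + 1) * (((n + 1 : ℕ) : ℝ) * y ^ (n + 1 - 1)) = b n * y ^ n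
    rw [hdsucc]
    have h00 : ((n : ℝ) + 1) ≠ 0 := by positivity
    push_cast
    field_simp
  have hg'_bound : ∀ n : ℕ, ∀ y : ℝ, |y| ≤ r → |g' n y| ≤ u' n := by
    intro n y hy
    cases n with
    | zero => simp [hg', hu'def, hm]
    | succ n =>
        rw [hg'_simp, hu'def]
        calc |b n * y ^ n| = |b n| * |y| ^ n := by rw [abs_mul, abs_pow]
          _ ≤ ((n : ℝ) + 1) ^ m * r ^ n := by
              apply mul_le_mul (hb_le n) (pow_le_pow_left₀ (abs_nonneg y) hy n)
                (by positivity) (by positivity)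
          _ = ((n + 1 : ℕ) : ℝ) ^ m * r ^ (n + 1 - 1) := by push_cast; ring
  -- summability at 0
  have hg_zero : Summable fun n => g n 0 := by
    have : (fun n : ℕ => g n 0) = fun _ => (0 : ℝ) := by
      funext n
      cases n with
      | zero => simp [hg, hd0]
      | succ n => simp [hg]
    rw [this]; exact summable_zero
  set s : Set ℝ := Metric.ball (0 : ℝ) r with hs
  have hmem : ∀ y : ℝ, y ∈ s ↔ |y| < r := by
    intro y; rw [hs, Metric.mem_ball, Real.dist_eq, sub_zero]
  have h0s : (0 : ℝ) ∈ s := by rw [hmem]; simpa using lt_of_le_of_lt habs hxr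
  -- derivative of the sum
  have hF : ∀ y ∈ s, HasDerivAt (fun z => ∑' n, g n z) (∑' n, g' n y) y := by
    intro y hy
    exact hasDerivAt_tsum_of_isPreconnected hu' Metric.isOpen_ball
      (convex_ball _ _).isPreconnected
      (fun n z _ => (hasDerivAt_pow n z).const_mul (d n))
      (fun n z hz => by
        rw [Real.norm_eq_abs]
        exact hg'_bound n z (le_of_lt ((hmem z).mp hz)))
      h0s hg_zero hy
  -- Cauchy product identity
  have hc_norm : ∀ y : ℝ, |y| ≤ r → Summable fun n => ‖c n * y ^ n‖ := by
    intro y hy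
    refine Summable.of_nonneg_of_le (fun n => norm_nonneg _) (fun n => ?_)
      (mpolylog_summable_poly_geom m hrnorm)
    rw [Real.norm_eq_abs, abs_mul, abs_pow]
    have h1 : |c n| ≤ ((n : ℝ) + 1) ^ m := by
      refine le_trans (mpolylog_abs_coeff_le k₁ n) ?_
      apply pow_le_pow_right₀ (by linarith [Nat.cast_nonneg (α := ℝ) n])
      omega
    exact mul_le_mul h1 (pow_le_pow_left₀ (abs_nonneg y) hy n) (by positivity) (by positivity)
  have hb_norm : ∀ y : ℝ, |y| ≤ r → Summable fun n => ‖b n * y ^ n‖ := by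
    intro y hy
    refine Summable.of_nonneg_of_le (fun n => norm_nonneg _) (fun n => ?_)
      (mpolylog_summable_poly_geom m hrnorm)
    rw [Real.norm_eq_abs, abs_mul, abs_pow]
    exact mul_le_mul (hb_le n) (pow_le_pow_left₀ (abs_nonneg y) hy n)
      (by positivity) (by positivity)
  have hcauchy : ∀ y : ℝ, |y| ≤ r → ∑' n, b n * y ^ n = mpolylog [k₁] y / (1 - y) := by
    intro y hy
    have hy1 : |y| < 1 := lt_of_le_of_lt hy hr1
    have hgeo_norm : Summable fun n : ℕ => ‖y ^ n‖ := by
      simpa [norm_pow] using summable_geometric_of_lt_one (abs_nonneg y) hy1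
    have hmul := tsum_mul_tsum_eq_tsum_sum_range_of_summable_norm (hc_norm y hy) hgeo_norm
    have heq : ∀ n : ℕ, ∑ k ∈ Finset.range (n + 1), c k * y ^ k * y ^ (n - k)
        = b n * y ^ n := by
      intro n
      rw [hbdef, Finset.sum_mul]
      refine Finset.sum_congr rfl fun k hk => ?_
      have hkn : k ≤ n := Nat.lt_succ_iff.mp (Finset.mem_range.mp hk)
      rw [mul_assoc, ← pow_add, Nat.add_sub_cancel' hkn]
    have hLi : mpolylog [k₁] y = ∑' n, c n * y ^ n := by
      rw [mpolylog]; rfl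
    have hgeotsum : ∑' n : ℕ, y ^ n = (1 - y)⁻¹ := tsum_geometric_of_abs_lt_one hy1
    rw [div_eq_mul_inv, hLi, ← hgeotsum, hmul]
    exact tsum_congr fun n => (heq n).symm
  -- derivative sum equals b-series
  have hderiv_eq : ∀ y : ℝ, |y| ≤ r → ∑' n, g' n y = ∑' n, b n * y ^ n := by
    intro y hy
    have hsum : Summable fun n => g' n y := by
      refine Summable.of_norm_bounded hu' fun n => ?_
      rw [Real.norm_eq_abs]; exact hg'_bound n y hy
    rw [Summable.tsum_eq_zero_add hsum]
    have : g' 0 y = 0 := by simp [hg']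
    rw [this, zero_add]
    exact tsum_congr fun n => hg'_simp n y
  -- assemble final derivative statement on uIcc
  have huIcc : ∀ t ∈ Set.uIcc (0 : ℝ) x, |t| ≤ |x| := by
    intro t ht
    rw [Set.mem_uIcc] at ht
    rcases ht with ⟨h1, h2⟩ | ⟨h1, h2⟩ <;>
      · rw [abs_le]; constructor <;> linarith [le_abs_self x, neg_abs_le x]
  have hFderiv : ∀ t ∈ Set.uIcc (0 : ℝ) x,
      HasDerivAt (fun z => ∑' n, g n z) (mpolylog [k₁] t / (1 - t)) t := by
    intro t ht
    have htr : |t| < r := lt_of_le_of_lt (huIcc t ht) hxr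
    have := hF t ((hmem t).mpr htr)
    rwa [hderiv_eq t htr.le, hcauchy t htr.le] at this
  -- integrability
  have hcont : ContinuousOn (fun t => mpolylog [k₁] t / (1 - t)) (Set.uIcc (0 : ℝ) x) := by
    have hsub : Set.uIcc (0 : ℝ) x ⊆ s := by
      intro t ht
      exact (hmem t).mpr (lt_of_le_of_lt (huIcc t ht) hxr)
    have hcont' : ContinuousOn (fun t => ∑' n, b n * t ^ n) s := by
      refine continuousOn_tsum (fun n => (continuousOn_pow n).const_smul (b n))
        (mpolylog_summable_poly_geom m hrnorm) fun n y hy => ?_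
      rw [Real.norm_eq_abs, abs_mul, abs_pow]
      exact mul_le_mul (hb_le n) (pow_le_pow_left₀ (abs_nonneg y)
        (le_of_lt ((hmem y).mp hy)) n) (by positivity) (by positivity)
    refine ((hcont'.mono hsub).congr fun t ht => ?_)
    exact (hcauchy t (lt_of_le_of_lt (huIcc t ht) hxr).le).symm
  have hint : IntervalIntegrable (fun t => mpolylog [k₁] t / (1 - t))
      MeasureTheory.volume 0 x := hcont.intervalIntegrable
  have key := intervalIntegral.integral_eq_sub_of_hasDerivAt hFderiv hint
  have hF0 : (∑' n, g n 0) = 0 := by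
    rw [show (fun n => g n 0) = fun _ => (0 : ℝ) from by
      funext n; cases n with
      | zero => simp [hg, hd0]
      | succ n => simp [hg]]
    exact tsum_zero
  have hFx : mpolylog [k₁, 1] x = ∑' n, g n x := by
    rw [mpolylog]; rfl
  rw [key, hF0, sub_zero, hFx]
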